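/- Let m ≥ 4, n = 2^m − 1, and let α be a primitive element of the finite field F_{2^m} (a generator of the multiplicative group F_{2^m}^*). Define the binary Hamming code BCH(1,m) = { c ∈ F_2^n : Σ_{i=0}^{n−1} c_i α^i = 0 } and the binary primitive double-error-correcting BCH code BCH(2,m) = { c ∈ F_2^n : Σ_{i=0}^{n−1} c_i α^i = 0 and Σ_{i=0}^{n−1} c_i α^{3i} = 0 }, where the coordinates c_i ∈ F_2 are viewed as elements of F_{2^m}. Then for every integer r with 1 ≤ r ≤ m, the r-th generalized covering radius satisfies ρ_r(BCH(2,m)) ≥ d_r(BCH(1,m)). -/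

import Mathlib

/-- The support of a vector `v ∈ F_2^n` : the set of coordinate positions where `v` is nonzero. -/
def vecSupp {n : ℕ} (v : Fin n → ZMod 2) : Finset (Fin n) :=
  Finset.univ.filter fun i => v i ≠ 0

/-- The support of a subspace `D ⊆ F_2^n` : the union of the supports of its elements. -/
def codeSupp {n : ℕ} (D : Submodule (ZMod 2) (Fin n → ZMod 2)) : Set (Fin n) :=
  {i | ∃ v ∈ D, v i ≠ 0}

/-- The `r`-th generalized Hamming weight of a binary linear code `C ⊆ F_2^n` : the minimum
support size of an `r`-dimensional subcode of `C`. -/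
noncomputable def ghw {n : ℕ} (C : Submodule (ZMod 2) (Fin n → ZMod 2)) (r : ℕ) : ℕ :=
  sInf {s | ∃ D : Submodule (ZMod 2) (Fin n → ZMod 2),
    D ≤ C ∧ Module.finrank (ZMod 2) ↥D = r ∧ (codeSupp D).ncard = s}

/-- The `F_2`-linear evaluation map `c ↦ Σ_{i=0}^{n−1} c_i • β^i ∈ F_{2^m}`, where the binary
coordinates `c_i` act on `F_{2^m}` via the `F_2`-module structure. -/
noncomputable def evalMap (m n : ℕ) (β : GaloisField 2 m) :
    (Fin n → ZMod 2) →ₗ[ZMod 2] GaloisField 2 m where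
  toFun c := ∑ i : Fin n, c i • β ^ (i : ℕ)
  map_add' c d := by simp [add_smul, Finset.sum_add_distrib]
  map_smul' a c := by simp [Finset.smul_sum, mul_smul]

/-- The binary Hamming code `BCH(1,m) = {c ∈ F_2^n : Σ c_i α^i = 0}`, `n = 2^m − 1`. -/
noncomputable def BCH1 (m : ℕ) (α : GaloisField 2 m) :
    Submodule (ZMod 2) (Fin (2 ^ m - 1) → ZMod 2) :=
  LinearMap.ker (evalMap m (2 ^ m - 1) α)

/-- The binary primitive double-error-correcting BCH code
`BCH(2,m) = {c ∈ F_2^n : Σ c_i α^i = 0 and Σ c_i α^{3i} = 0}`, `n = 2^m − 1`. -/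
noncomputable def BCH2 (m : ℕ) (α : GaloisField 2 m) :
    Submodule (ZMod 2) (Fin (2 ^ m - 1) → ZMod 2) :=
  LinearMap.ker (evalMap m (2 ^ m - 1) α) ⊓ LinearMap.ker (evalMap m (2 ^ m - 1) (α ^ 3))


open Finset Polynomial

lemma aux_exists_eval_ne {F : Type*} [Field F] [Fintype F] [DecidableEq F]
    (p : Polynomial F) (hp : p ≠ 0) (hd : p.natDegree < Fintype.card F) :
    ∃ x, p.eval x ≠ 0 := by
  by_contra h
  push_neg at h
  have hsub : (Finset.univ : Finset F) ⊆ p.roots.toFinset := by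
    intro x _
    rw [Multiset.mem_toFinset, Polynomial.mem_roots hp]
    exact h x
  have h1 := Finset.card_le_card hsub
  have h2 := p.roots.toFinset_card_le
  have h3 := p.card_roots'
  simp only [Finset.card_univ] at h1
  omega

lemma aux_dlog (m : ℕ) (hm : 4 ≤ m) (α : GaloisField 2 m) (hα : orderOf α = 2 ^ m - 1)
    (x : GaloisField 2 m) (hx : x ≠ 0) : ∃ i : Fin (2 ^ m - 1), α ^ (i : ℕ) = x := by
  have h16 : 16 ≤ 2 ^ m := by
    calc (16:ℕ) = 2 ^ 4 := by norm_num
    _ ≤ 2 ^ m := Nat.pow_le_pow_right (by norm_num) hm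
  have hN : 0 < 2 ^ m - 1 := by omega
  have hα1 : α ^ (2 ^ m - 1) = 1 := by rw [← hα]; exact pow_orderOf_eq_one α
  have hα0 : α ≠ 0 := by
    intro h; rw [h, zero_pow (by omega)] at hα1; exact zero_ne_one hα1
  classical
  haveI : Fintype (GaloisField 2 m) := Fintype.ofFinite _
  have hcardu : Nat.card (GaloisField 2 m)ˣ = 2 ^ m - 1 := by
    rw [Nat.card_eq_fintype_card, Fintype.card_units, ← Nat.card_eq_fintype_card,
      GaloisField.card 2 m (by omega)]
  set u : (GaloisField 2 m)ˣ := Units.mk0 α hα0 with hu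
  have hou : orderOf u = 2 ^ m - 1 := by
    rw [← orderOf_units]; exact hα
  have htop : Subgroup.zpowers u = ⊤ := by
    apply Subgroup.eq_top_of_card_eq
    rw [Nat.card_zpowers, hou, hcardu]
  have hxu : (Units.mk0 x hx) ∈ Subgroup.zpowers u := by rw [htop]; trivial
  have hfin : IsOfFinOrder u := by
    rw [← orderOf_pos_iff, hou]; omega
  rw [← hfin.mem_powers_iff_mem_zpowers, Submonoid.mem_powers_iff] at hxu
  obtain ⟨k, hk⟩ := hxu
  have hk' : α ^ k = x := by
    have := congrArg Units.val hk
    simpa [hu] using this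
  refine ⟨⟨k % (2 ^ m - 1), Nat.mod_lt _ hN⟩, ?_⟩
  show α ^ (k % (2 ^ m - 1)) = x
  rw [← hα, pow_mod_orderOf, hk']

open Finset Polynomial

lemma aux_two_eq_zero (m : ℕ) : (2 : GaloisField 2 m) = 0 := by
  have : ((2 : ℕ) : GaloisField 2 m) = 0 := CharP.cast_eq_zero _ 2
  simpa using this

lemma aux_mem_W (m : ℕ) (hm : 4 ≤ m) (α : GaloisField 2 m) (hα : orderOf α = 2 ^ m - 1)
    (a b : GaloisField 2 m) :
    a ^ 2 * b + a * b ^ 2 ∈ Submodule.map (evalMap m (2 ^ m - 1) (α ^ 3)) (BCH1 m α) := by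
  have h2 := aux_two_eq_zero m
  by_cases ha : a = 0
  · have : a ^ 2 * b + a * b ^ 2 = 0 := by rw [ha]; ring
    rw [this]; exact Submodule.zero_mem _
  by_cases hb : b = 0
  · have : a ^ 2 * b + a * b ^ 2 = 0 := by rw [hb]; ring
    rw [this]; exact Submodule.zero_mem _
  by_cases hab : a + b = 0
  · have hba : b = a := by linear_combination hab - a * h2
    have : a ^ 2 * b + a * b ^ 2 = 0 := by rw [hba]; linear_combination a ^ 3 * h2
    rw [this]; exact Submodule.zero_mem _
  obtain ⟨i, hi⟩ := aux_dlog m hm α hα a ha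
  obtain ⟨j, hj⟩ := aux_dlog m hm α hα b hb
  obtain ⟨k, hk⟩ := aux_dlog m hm α hα (a + b) hab
  set e : Fin (2 ^ m - 1) → (Fin (2 ^ m - 1) → ZMod 2) := fun t s => if s = t then 1 else 0 with he
  have heval : ∀ (β : GaloisField 2 m) (t : Fin (2 ^ m - 1)),
      evalMap m (2 ^ m - 1) β (e t) = β ^ (t : ℕ) := by
    intro β t
    simp [evalMap, he, ite_smul, Finset.sum_ite_eq']
  refine ⟨e i + e j + e k, ?_, ?_⟩
  · show _ ∈ LinearMap.ker _
    rw [LinearMap.mem_ker, map_add, map_add, heval, heval, heval, hi, hj, hk]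
    linear_combination (a + b) * h2
  · rw [map_add, map_add, heval, heval, heval]
    have h3 : ∀ (t : Fin (2 ^ m - 1)) (x : GaloisField 2 m),
        α ^ (t : ℕ) = x → (α ^ 3) ^ (t : ℕ) = x ^ 3 := by
      intro t x h
      rw [← h, ← pow_mul, ← pow_mul, Nat.mul_comm]
    rw [h3 i a hi, h3 j b hj, h3 k (a + b) hk]
    linear_combination (a ^ 3 + b ^ 3 + a ^ 2 * b + a * b ^ 2) * h2

lemma aux_W_top (m : ℕ) (hm : 4 ≤ m) (α : GaloisField 2 m) (hα : orderOf α = 2 ^ m - 1) :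
    Submodule.map (evalMap m (2 ^ m - 1) (α ^ 3)) (BCH1 m α) = ⊤ := by
  classical
  haveI : Fintype (GaloisField 2 m) := Fintype.ofFinite _
  have h16 : 16 ≤ 2 ^ m := by
    calc (16:ℕ) = 2 ^ 4 := by norm_num
    _ ≤ 2 ^ m := Nat.pow_le_pow_right (by norm_num) hm
  have hcard : Fintype.card (GaloisField 2 m) = 2 ^ m := by
    rw [← Nat.card_eq_fintype_card, GaloisField.card 2 m (by omega)]
  have h2 := aux_two_eq_zero m
  have hfr : Module.finrank (ZMod 2) (GaloisField 2 m) = m := GaloisField.finrank 2 (by omega)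
  set W := Submodule.map (evalMap m (2 ^ m - 1) (α ^ 3)) (BCH1 m α) with hW
  by_contra hne
  have hWlt : W < ⊤ := lt_top_iff_ne_top.2 hne
  -- the linear map q x = x + x^2
  have hsmul : ∀ (c : ZMod 2) (x : GaloisField 2 m), (c • x) + (c • x) ^ 2 = c • (x + x ^ 2) := by
    intro c x
    fin_cases c
    · change (0 : ZMod 2) • x + ((0 : ZMod 2) • x) ^ 2 = (0 : ZMod 2) • (x + x ^ 2); simp
    · change (1 : ZMod 2) • x + ((1 : ZMod 2) • x) ^ 2 = (1 : ZMod 2) • (x + x ^ 2); simp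
  set q : GaloisField 2 m →ₗ[ZMod 2] GaloisField 2 m :=
    { toFun := fun x => x + x ^ 2
      map_add' := fun x y => by linear_combination x * y * h2
      map_smul' := fun c x => hsmul c x } with hq
  have hV0W : LinearMap.range q ≤ W := by
    rintro _ ⟨c, rfl⟩
    have := aux_mem_W m hm α hα 1 c
    show c + c ^ 2 ∈ W
    rw [hW]; simpa using this
  have hkerle : LinearMap.ker q ≤ Submodule.span (ZMod 2) {(1 : GaloisField 2 m)} := by
    intro x hx
    rw [LinearMap.mem_ker] at hx
    have hx' : x + x ^ 2 = 0 := hx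
    have : x * (1 + x) = 0 := by linear_combination hx'
    rcases mul_eq_zero.1 this with h | h
    · rw [h]; exact Submodule.zero_mem _
    · have : x = 1 := by linear_combination -h + x * h2
      rw [this]; exact Submodule.mem_span_singleton_self _
  have hkerfr : Module.finrank (ZMod 2) (LinearMap.ker q) ≤ 1 := by
    refine le_trans (Submodule.finrank_mono hkerle) ?_
    rw [finrank_span_singleton (one_ne_zero)]
  have hrn := LinearMap.finrank_range_add_finrank_ker q
  rw [hfr] at hrn
  have hWfr : Module.finrank (ZMod 2) W < m := by
    have := Submodule.finrank_lt (K := ZMod 2) (V := GaloisField 2 m) hWlt.ne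
    rwa [hfr] at this
  have hVW : LinearMap.range q = W := by
    apply Submodule.eq_of_le_of_finrank_le hV0W
    omega
  have H : ∀ a b : GaloisField 2 m, ∃ c, c + c ^ 2 = a ^ 2 * b + a * b ^ 2 := by
    intro a b
    have := aux_mem_W m hm α hα a b
    rw [← hW, ← hVW] at this
    obtain ⟨c, hc⟩ := this
    exact ⟨c, hc⟩
  -- trace function
  have hpow : ∀ x : GaloisField 2 m, x ^ (2 ^ m) = x := by
    intro x
    have := FiniteField.pow_card x
    rwa [hcard] at this
  set T : GaloisField 2 m → GaloisField 2 m := fun x => ∑ i ∈ Finset.range m, x ^ (2 ^ i) with hT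
  have hTadd : ∀ x y, T (x + y) = T x + T y := by
    intro x y
    rw [hT]
    simp only
    rw [← Finset.sum_add_distrib]
    exact Finset.sum_congr rfl fun i _ => add_pow_char_pow x y 2 i
  have hTsq : ∀ x, T (x ^ 2) = T x := by
    intro x
    have e1 : ∀ i : ℕ, (x ^ 2) ^ (2 ^ i) = x ^ (2 ^ (i + 1)) := by
      intro i
      rw [← pow_mul]
      congr 1
      ring
    have key : T (x ^ 2) + x = T x + x := by
      calc T (x ^ 2) + x = (∑ i ∈ Finset.range m, x ^ (2 ^ (i + 1))) + x ^ (2 ^ 0) := by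
            rw [hT]; simp only
            congr 1
            · exact Finset.sum_congr rfl fun i _ => e1 i
            · norm_num
        _ = ∑ i ∈ Finset.range (m + 1), x ^ (2 ^ i) := (Finset.sum_range_succ' (fun i => x ^ 2 ^ i) m).symm
        _ = (∑ i ∈ Finset.range m, x ^ (2 ^ i)) + x ^ (2 ^ m) := Finset.sum_range_succ _ m
        _ = T x + x := by rw [hpow x, hT]
    exact add_right_cancel key
  have hT0 : ∀ c, T (c + c ^ 2) = 0 := by
    intro c
    rw [hTadd, hTsq]
    exact CharTwo.add_self_eq_zero _
  have step3 : ∀ x b : GaloisField 2 m, T (x * (b + b ^ 4)) = 0 := by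
    intro x b
    obtain ⟨a, ha⟩ : ∃ a, a ^ 2 = x := by
      refine ⟨x ^ (2 ^ (m - 1)), ?_⟩
      rw [← pow_mul]
      have : 2 ^ (m - 1) * 2 = 2 ^ m := by
        rw [← pow_succ]
        congr 1
        omega
      rw [this, hpow]
    have t1 : T (a ^ 2 * b + a * b ^ 2) = 0 := by
      obtain ⟨c, hc⟩ := H a b
      rw [← hc]; exact hT0 c
    have t2 : T (a ^ 2 * b) + T (a * b ^ 2) = 0 := by rw [← hTadd]; exact t1
    have t3 : T (a * b ^ 2) = T (a ^ 2 * b ^ 4) := by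
      rw [show a ^ 2 * b ^ 4 = (a * b ^ 2) ^ 2 by ring]
      exact (hTsq _).symm
    have t4 : T (x * (b + b ^ 4)) = T (a ^ 2 * b) + T (a ^ 2 * b ^ 4) := by
      rw [← hTadd]
      congr 1
      rw [← ha]; ring
    rw [t4, ← t3]
    exact t2
  -- exists b with b + b^4 ≠ 0
  obtain ⟨b₀, hb₀⟩ : ∃ b : GaloisField 2 m, b + b ^ 4 ≠ 0 := by
    obtain ⟨x, hx⟩ := aux_exists_eval_ne (Polynomial.X + Polynomial.X ^ 4 : Polynomial (GaloisField 2 m))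
      (by
        intro h
        have := congrArg (fun p => Polynomial.coeff p 4) h
        simp [Polynomial.coeff_X, Polynomial.coeff_X_pow] at this)
      (by
        have : (Polynomial.X + Polynomial.X ^ 4 : Polynomial (GaloisField 2 m)).natDegree ≤ 4 := by
          refine le_trans (Polynomial.natDegree_add_le _ _) ?_
          simp [Polynomial.natDegree_X_pow]
        omega)
    exact ⟨x, by simpa using hx⟩
  have hallT : ∀ z, T z = 0 := by
    intro z
    have := step3 (z * (b₀ + b₀ ^ 4)⁻¹) b₀
    rwa [show z * (b₀ + b₀ ^ 4)⁻¹ * (b₀ + b₀ ^ 4) = z by rw [mul_assoc, inv_mul_cancel₀ hb₀, mul_one]] at this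
  -- but T is not identically zero
  set P : Polynomial (GaloisField 2 m) := ∑ i ∈ Finset.range m, Polynomial.X ^ (2 ^ i) with hP
  have hPeval : ∀ z, P.eval z = T z := by
    intro z
    rw [hP, hT, Polynomial.eval_finset_sum]
    simp only [Polynomial.eval_pow, Polynomial.eval_X]
  have hPcoeff : P.coeff (2 ^ (m - 1)) = 1 := by
    rw [hP, Polynomial.finset_sum_coeff]
    rw [Finset.sum_eq_single (m - 1)]
    · rw [Polynomial.coeff_X_pow, if_pos rfl]
    · intro i hi hne
      rw [Polynomial.coeff_X_pow, if_neg]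
      intro hEq
      exact hne (Nat.pow_right_injective (le_refl 2) hEq.symm)
    · intro h
      exact absurd (Finset.mem_range.2 (by omega)) h
  have hPne : P ≠ 0 := by
    intro h0
    rw [h0] at hPcoeff
    simp at hPcoeff
  have hPdeg : P.natDegree < Fintype.card (GaloisField 2 m) := by
    have hd : P.natDegree ≤ 2 ^ (m - 1) := by
      rw [hP]
      refine Polynomial.natDegree_sum_le_of_forall_le _ _ ?_
      intro i hi
      rw [Finset.mem_range] at hi
      rw [Polynomial.natDegree_X_pow]
      exact Nat.pow_le_pow_right (by norm_num) (by omega)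
    have : (2:ℕ) ^ (m - 1) < 2 ^ m := Nat.pow_lt_pow_right (by norm_num) (by omega)
    omega
  obtain ⟨z, hz⟩ := aux_exists_eval_ne P hPne hPdeg
  exact hz (by rw [hPeval]; exact hallT z)

/-- For `m ≥ 4`, a primitive element `α` of `F_{2^m}` (i.e. of multiplicative order `2^m − 1`),
and `1 ≤ r ≤ m`, the `r`-th generalized covering radius of `BCH(2,m)` is at least the `r`-th
generalized Hamming weight of `BCH(1,m)`: there exist `v_1, …, v_r ∈ F_2^n` such that for all
codewords `c_1, …, c_r ∈ BCH(2,m)`, the union of the supports of `v_i − c_i` has cardinality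
at least `d_r(BCH(1,m))`. -/
theorem gcr_BCH2_ge_ghw_BCH1 (m : ℕ) (hm : 4 ≤ m) (α : GaloisField 2 m)
    (hα : orderOf α = 2 ^ m - 1) (r : ℕ) (hr : 1 ≤ r) (hrm : r ≤ m) :
    ∃ v : Fin r → (Fin (2 ^ m - 1) → ZMod 2),
      ∀ c : Fin r → (Fin (2 ^ m - 1) → ZMod 2), (∀ i, c i ∈ BCH2 m α) →
        ghw (BCH1 m α) r ≤ (Finset.univ.biUnion fun i => vecSupp (v i - c i)).card := by

  classical
  have hfr : Module.finrank (ZMod 2) (GaloisField 2 m) = m := GaloisField.finrank 2 (by omega)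
  have hWtop := aux_W_top m hm α hα
  let bF := Module.finBasis (ZMod 2) (GaloisField 2 m)
  let emb : Fin r → Fin (Module.finrank (ZMod 2) (GaloisField 2 m)) :=
    fun i => ⟨(i : ℕ), by omega⟩
  have hembinj : Function.Injective emb := by
    intro i j h
    simpa [emb, Fin.ext_iff] using h
  set t : Fin r → GaloisField 2 m := fun i => bF (emb i) with ht
  have htli : LinearIndependent (ZMod 2) t := bF.linearIndependent.comp emb hembinj
  have hpre : ∀ i, ∃ w, w ∈ BCH1 m α ∧ evalMap m (2 ^ m - 1) (α ^ 3) w = t i := by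
    intro i
    have hmem : t i ∈ Submodule.map (evalMap m (2 ^ m - 1) (α ^ 3)) (BCH1 m α) := by
      rw [hWtop]; trivial
    obtain ⟨w, hw, hw'⟩ := Submodule.mem_map.1 hmem
    exact ⟨w, hw, hw'⟩
  choose v hv1 hv3 using hpre
  refine ⟨v, ?_⟩
  intro c hc
  set u : Fin r → (Fin (2 ^ m - 1) → ZMod 2) := fun i => v i - c i with hu
  have hc1 : ∀ i, c i ∈ LinearMap.ker (evalMap m (2 ^ m - 1) α) := fun i =>
    (Submodule.mem_inf.1 (hc i)).1
  have hc3 : ∀ i, evalMap m (2 ^ m - 1) (α ^ 3) (c i) = 0 := fun i =>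
    LinearMap.mem_ker.1 (Submodule.mem_inf.1 (hc i)).2
  have hu1 : ∀ i, u i ∈ BCH1 m α := fun i => sub_mem (hv1 i) (hc1 i)
  have hu3 : ∀ i, evalMap m (2 ^ m - 1) (α ^ 3) (u i) = t i := by
    intro i
    rw [hu]
    simp only [map_sub, hv3, hc3, sub_zero]
  have huli : LinearIndependent (ZMod 2) u := by
    apply LinearIndependent.of_comp (evalMap m (2 ^ m - 1) (α ^ 3))
    have : (fun i => evalMap m (2 ^ m - 1) (α ^ 3) (u i)) = t := funext hu3
    rw [show (⇑(evalMap m (2 ^ m - 1) (α ^ 3)) ∘ u) = t from funext fun i => hu3 i]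
    exact htli
  set D := Submodule.span (ZMod 2) (Set.range u) with hD
  have hDle : D ≤ BCH1 m α := Submodule.span_le.2 (by rintro _ ⟨i, rfl⟩; exact hu1 i)
  have hDrank : Module.finrank (ZMod 2) D = r := by
    rw [hD, finrank_span_eq_card huli, Fintype.card_fin]
  have hsupp : codeSupp D ⊆ ↑(Finset.univ.biUnion fun i => vecSupp (v i - c i)) := by
    rintro j ⟨w, hwD, hwj⟩
    rw [hD, Submodule.mem_span_range_iff_exists_fun] at hwD
    obtain ⟨g, hg⟩ := hwD
    have hex : ∃ i, u i j ≠ 0 := by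
      by_contra hno
      push_neg at hno
      apply hwj
      rw [← hg]
      rw [Finset.sum_apply]
      apply Finset.sum_eq_zero
      intro i _
      rw [Pi.smul_apply, hno i, smul_zero]
    obtain ⟨i, hi⟩ := hex
    rw [Finset.coe_biUnion]
    refine Set.mem_biUnion (Finset.mem_coe.2 (Finset.mem_univ i)) ?_
    rw [Finset.mem_coe, vecSupp, Finset.mem_filter]
    exact ⟨Finset.mem_univ j, hi⟩
  have hle : (codeSupp D).ncard ≤ (Finset.univ.biUnion fun i => vecSupp (v i - c i)).card := by
    have h := Set.ncard_le_ncard hsupp (Finset.finite_toSet _)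
    rwa [Set.ncard_coe_finset] at h
  exact le_trans (Nat.sInf_le ⟨D, hDle, hDrank, rfl⟩) hle
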